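/- Let α = (a_1,...,a_k) be a nonempty zero-free sequence in an abelian group G with sumset Σ, and suppose b is a 1-term for the zero-free extension α∪{b}, so that Σ = {b,2b,...,sb} ∪ C_1 ∪ ... ∪ C_m where 1 ≤ s < ord(b)−1 and C_1,...,C_m are complete proper cosets of ⟨b⟩. If c ∈ G is such that α∪{c} is zero-free and c is a 1-term for α∪{c}, then c = b. -/

import Mathlib

def ZeroFree {G : Type*} [AddCommGroup G] (l : List G) : Prop :=
  ∀ t : List G, t.Sublist l → t ≠ [] → t.sum ≠ 0

def sumset {G : Type*} [AddCommGroup G] (l : List G) : Set G :=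
  {x | ∃ t : List G, t.Sublist l ∧ t ≠ [] ∧ t.sum = x}

namespace Stmt3Aux

variable {G : Type*} [AddCommGroup G]


lemma zmod_val_eq_iff (n : ℕ) [NeZero n] (u : ZMod n) (k : ℕ) (hk : k < n) :
    u.val = k ↔ u = (k : ZMod n) := by
  constructor
  · intro h
    have hcast : ((u.val : ℕ) : ZMod n) = u := ZMod.natCast_rightInverse u
    rw [h] at hcast; exact hcast.symm
  · intro h; rw [h, ZMod.val_natCast, Nat.mod_eq_of_lt hk]

lemma zmod_half (n s : ℕ) (hn : 3 ≤ n) (hs1 : 1 ≤ s) (hs2 : s ≤ n - 2)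
    (u v : ZMod n) (huv : u * v = 1)
    (hA : ∀ x : ZMod n, (1 ≤ (u * x).val ∧ (u * x).val ≤ s) ↔ (1 ≤ x.val ∧ x.val ≤ s))
    (hu1 : u ≠ 1) : n + 1 ≤ 2 * s := by
  haveI : NeZero n := ⟨by omega⟩
  have hval1 : (1 : ZMod n).val = 1 := by
    haveI : Fact (1 < n) := ⟨by omega⟩; exact ZMod.val_one n
  -- u ∈ A
  have hu : 1 ≤ u.val ∧ u.val ≤ s := by
    have := (hA 1).mpr (by rw [hval1]; omega)
    rwa [mul_one] at this
  have hu2 : 2 ≤ u.val := by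
    rcases Nat.lt_or_ge u.val 2 with h | h
    · exact absurd (((zmod_val_eq_iff n u 1 (by omega)).mp (by omega)).trans (by norm_num)) hu1
    · exact h
  -- v ∈ A
  have hv : 1 ≤ v.val ∧ v.val ≤ s := (hA v).mp (by rw [huv, hval1]; omega)
  have hv1 : v ≠ 1 := by rintro rfl; rw [mul_one] at huv; exact hu1 huv
  have hv2 : 2 ≤ v.val := by
    rcases Nat.lt_or_ge v.val 2 with h | h
    · exact absurd (((zmod_val_eq_iff n v 1 (by omega)).mp (by omega)).trans (by norm_num)) hv1
    · exact h
  -- w := v - 1 ∈ A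
  have hvlt : v.val < n := ZMod.val_lt v
  have hw_eq : v - 1 = ((v.val - 1 : ℕ) : ZMod n) := by
    have hk : v.val - 1 + 1 = v.val := by omega
    have h1 : ((v.val : ℕ) : ZMod n) = v := ZMod.natCast_rightInverse v
    rw [← hk] at h1
    push_cast at h1
    exact (eq_sub_of_add_eq h1).symm
  have hw_val : (v - 1).val = v.val - 1 := by
    rw [hw_eq, ZMod.val_natCast, Nat.mod_eq_of_lt (by omega)]
  have hw : 1 ≤ (v - 1).val ∧ (v - 1).val ≤ s := by omega
  -- u * (v-1) = 1 - u ∈ A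
  have huw : 1 ≤ (u * (v - 1)).val ∧ (u * (v - 1)).val ≤ s := (hA _).mpr hw
  have huw_eq : u * (v - 1) = -(u - 1) := by rw [mul_sub, huv]; ring
  -- val of -(u-1)
  have hult : u.val < n := ZMod.val_lt u
  have hu1_eq : u - 1 = ((u.val - 1 : ℕ) : ZMod n) := by
    have hk : u.val - 1 + 1 = u.val := by omega
    have h1 : ((u.val : ℕ) : ZMod n) = u := ZMod.natCast_rightInverse u
    rw [← hk] at h1
    push_cast at h1
    exact (eq_sub_of_add_eq h1).symm
  have hu1_val : (u - 1).val = u.val - 1 := by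
    rw [hu1_eq, ZMod.val_natCast, Nat.mod_eq_of_lt (by omega)]
  have hu1_ne : u - 1 ≠ 0 := by
    intro h
    have : (u - 1).val = 0 := by rw [h]; exact ZMod.val_zero
    omega
  have hneg_val : (-(u - 1)).val = n - (u.val - 1) := by
    rw [ZMod.neg_val]; simp [hu1_ne, hu1_val]
  rw [huw_eq, hneg_val] at huw
  omega

lemma zmod_interval (n s : ℕ) (hn : 3 ≤ n) (hs1 : 1 ≤ s) (hs2 : s ≤ n - 2)
    (u v : ZMod n) (huv : u * v = 1)
    (hA : ∀ x : ZMod n, (1 ≤ (u * x).val ∧ (u * x).val ≤ s) ↔ (1 ≤ x.val ∧ x.val ≤ s)) :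
    u = 1 := by
  by_contra hu1
  haveI : NeZero n := ⟨by omega⟩
  have h1 : n + 1 ≤ 2 * s := zmod_half n s hn hs1 hs2 u v huv hA hu1
  -- mirrored interval s' = n - 1 - s
  have hzero : ∀ x : ZMod n, u * x = 0 ↔ x = 0 := by
    intro x
    constructor
    · intro h
      have : v * (u * x) = 0 := by rw [h, mul_zero]
      rwa [← mul_assoc, mul_comm v u, huv, one_mul] at this
    · rintro rfl; rw [mul_zero]
  have hval_ne : ∀ x : ZMod n, x ≠ 0 ↔ 1 ≤ x.val := by
    intro x
    constructor
    · intro h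
      rcases Nat.eq_zero_or_pos x.val with h0 | h0
      · exact absurd ((zmod_val_eq_iff n x 0 (by omega)).mp h0|>.trans (by norm_num)) h
      · exact h0
    · intro h hx; rw [hx] at h; simp [ZMod.val_zero] at h
  -- B invariance : val ∈ [s+1, n-1] ↔ (x ≠ 0 ∧ ¬(val ∈ [1,s]))
  have hB : ∀ x : ZMod n, (s + 1 ≤ (u * x).val ↔ s + 1 ≤ x.val) := by
    intro x
    have hxlt : x.val < n := ZMod.val_lt x
    have huxlt : (u * x).val < n := ZMod.val_lt (u * x)
    have h1' := hA x
    have h2' := (hval_ne (u * x)).symm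
    have h3' := (hval_ne x).symm
    have h4' := hzero x
    constructor
    · intro h
      have hux0 : u * x ≠ 0 := by rw [hval_ne]; omega
      have hx0 : x ≠ 0 := fun hh => hux0 (by rw [hh, mul_zero])
      have : 1 ≤ x.val := (hval_ne x).mp hx0
      rcases Nat.lt_or_ge x.val (s+1) with hlt | hge
      · exfalso
        have := (hA x).mpr ⟨this, by omega⟩
        omega
      · exact hge
    · intro h
      have hx0 : x ≠ 0 := by rw [hval_ne]; omega
      have hux0 : u * x ≠ 0 := fun hh => hx0 ((hzero x).mp hh)
      have : 1 ≤ (u * x).val := (hval_ne _).mp hux0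
      rcases Nat.lt_or_ge (u * x).val (s+1) with hlt | hge
      · exfalso
        have := (hA x).mp ⟨this, by omega⟩
        omega
      · exact hge
  -- A' invariance for s' := n - 1 - s
  have hA' : ∀ x : ZMod n, (1 ≤ (u * x).val ∧ (u * x).val ≤ n - 1 - s) ↔
      (1 ≤ x.val ∧ x.val ≤ n - 1 - s) := by
    intro x
    -- y.val ∈ [1, n-1-s] ↔ s+1 ≤ (-y).val
    have key : ∀ y : ZMod n, (1 ≤ y.val ∧ y.val ≤ n - 1 - s) ↔ s + 1 ≤ (-y).val := by
      intro y
      by_cases hy : y = 0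
      · subst hy
        simp only [neg_zero, ZMod.val_zero]
        omega
      · have hylt : y.val < n := ZMod.val_lt y
        have hy1 : 1 ≤ y.val := (hval_ne y).mp hy
        have : (-y).val = n - y.val := by rw [ZMod.neg_val]; simp [hy]
        rw [this]; omega
    rw [key (u * x), key x]
    have : -(u * x) = u * (-x) := by ring
    rw [this]
    exact hB (-x)
  have h2 : n + 1 ≤ 2 * (n - 1 - s) := zmod_half n (n - 1 - s) hn (by omega) (by omega) u v huv hA' hu1
  omega



lemma sumset_append_singleton (α : List G) (b : G) :
    sumset (α ++ [b]) = sumset α ∪ (fun x => x + b) '' (insert 0 (sumset α)) := by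
  ext x
  constructor
  · rintro ⟨t, ht, hne, rfl⟩
    rw [List.sublist_append_iff] at ht
    obtain ⟨l₁, l₂, rfl, h₁, h₂⟩ := ht
    have h2 : l₂ = [] ∨ l₂ = [b] := by
      cases h₂ with
      | cons _ h => left; simpa using List.sublist_nil.mp h
      | cons_cons _ h => right; simpa using List.sublist_nil.mp h
    rcases h2 with rfl | rfl
    · left; exact ⟨l₁, h₁, by simpa using hne, by simp⟩
    · right
      rcases eq_or_ne l₁ [] with rfl | hl
      · exact ⟨0, Set.mem_insert _ _, by simp⟩
      · exact ⟨l₁.sum, Set.mem_insert_of_mem _ ⟨l₁, h₁, hl, rfl⟩, by simp [List.sum_append]⟩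
  · rintro (⟨t, ht, hne, rfl⟩ | ⟨y, hy, rfl⟩)
    · exact ⟨t, ht.trans (List.sublist_append_left _ _), hne, rfl⟩
    · rcases hy with rfl | ⟨t, ht, hne, rfl⟩
      · exact ⟨[b], List.sublist_append_right α [b], by simp, by simp⟩
      · exact ⟨t ++ [b], ht.append (List.Sublist.refl [b]), by simp, by simp⟩

lemma zerofree_not_mem (l : List G) (h : ZeroFree l) : (0 : G) ∉ sumset l := by
  rintro ⟨t, ht, hne, hsum⟩
  exact h t ht hne hsum

lemma sublist_compl {t l : List G} (h : t.Sublist l) :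
    ∃ u : List G, u.Sublist l ∧ t.sum + u.sum = l.sum := by
  induction h with
  | slnil => exact ⟨[], List.Sublist.refl _, by simp⟩
  | @cons l₁ l₂ a h ih =>
      obtain ⟨u, hu, hs⟩ := ih
      exact ⟨a :: u, hu.cons₂ a, by simp only [List.sum_cons, ← hs]; abel⟩
  | @cons_cons l₁ l₂ a h ih =>
      obtain ⟨u, hu, hs⟩ := ih
      exact ⟨u, hu.cons a, by simp only [List.sum_cons, ← hs]; abel⟩

lemma mem_sumset_self (α : List G) (hne : α ≠ []) : α.sum ∈ sumset α :=
  ⟨α, List.Sublist.refl _, hne, rfl⟩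




lemma zerofree_prefix {α : List G} {b : G} (h : ZeroFree (α ++ [b])) : ZeroFree α :=
  fun t ht hne => h t (ht.trans (List.sublist_append_left _ _)) hne

lemma setup (α : List G) (b : G) (hne : α ≠ [])
    (hzfb : ZeroFree (α ++ [b]))
    (h1b : (sumset (α ++ [b])).ncard = (sumset α).ncard + 1)
    (hfin : (sumset α).Finite) :
    ∃ e : G, (fun x => x + b) '' (insert 0 (sumset α)) = insert e (sumset α) ∧
      e ∉ sumset α ∧ e ≠ 0 ∧ b ∈ sumset α := by
  set S := sumset α with hSdef
  set P := (fun x => x + b) '' (insert 0 S) with hPdef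
  have hS0 : (0 : G) ∉ S := zerofree_not_mem α (zerofree_prefix hzfb)
  have h0' : (0 : G) ∉ sumset (α ++ [b]) := zerofree_not_mem _ hzfb
  have hchar : sumset (α ++ [b]) = S ∪ P := sumset_append_singleton α b
  have hPfin : P.Finite := (hfin.insert 0).image _
  have hPcard : P.ncard = S.ncard + 1 := by
    rw [hPdef, Set.ncard_image_of_injective _ (add_left_injective b),
      Set.ncard_insert_of_notMem hS0 hfin]
  have hUfin : (S ∪ P).Finite := hfin.union hPfin
  have hP_eq : S ∪ P = P := by
    refine (Set.eq_of_subset_of_ncard_le (Set.subset_union_right) ?_ hUfin).symm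
    rw [← hchar, h1b, hPcard]
  have hSP : S ⊆ P := by rw [← hP_eq]; exact Set.subset_union_left
  have hdiff : (P \ S).ncard = 1 := by
    rw [Set.ncard_diff hSP hfin, hPcard]; omega
  obtain ⟨e, he⟩ := Set.ncard_eq_one.mp hdiff
  have hePS : e ∈ P \ S := he ▸ rfl
  have hP_ins : P = insert e S := by
    apply Set.Subset.antisymm
    · intro x hx
      by_cases hxS : x ∈ S
      · exact Set.mem_insert_of_mem _ hxS
      · have : x ∈ P \ S := ⟨hx, hxS⟩
        rw [he] at this
        exact this ▸ Set.mem_insert _ _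
    · intro x hx
      rcases hx with rfl | hx
      · exact hePS.1
      · exact hSP hx
  have hPsum : P ⊆ sumset (α ++ [b]) := by rw [hchar]; exact Set.subset_union_right
  have he0 : e ≠ 0 := by
    intro h
    exact h0' (hPsum (h ▸ hePS.1))
  have hb_ne0 : b ≠ 0 := by
    intro h
    apply h0'
    apply hPsum
    exact ⟨0, Set.mem_insert _ _, by simp [h]⟩
  have hbS : b ∈ S := by
    have hσ : α.sum ∈ S := mem_sumset_self α hne
    obtain ⟨x, hx, hxb⟩ := hSP hσ
    rcases hx with rfl | hx
    · simp only [zero_add] at hxb; rwa [hxb]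
    · obtain ⟨t, ht, htne, hts⟩ := hx
      obtain ⟨u, hu, hsum⟩ := sublist_compl ht
      have hxb' : x + b = α.sum := hxb
      have hub : u.sum = b := by
        have : x + u.sum = x + b := by rw [← hts, hsum, hts]; exact hxb'.symm
        exact add_left_cancel this
      have hune : u ≠ [] := by
        intro h; rw [h] at hub; simp at hub; exact hb_ne0 hub.symm
      exact ⟨u, hu, hune, hub⟩
  exact ⟨e, hP_ins, hePS.2, he0, hbS⟩


/-- `x` is an integer multiple of `b`. -/
def inZ (b x : G) : Prop := ∃ k : ℤ, k • b = x

/-- The package of hypotheses extracted from a 1-term extension. -/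
structure Pkg (S : Set G) (b e : G) : Prop where
  fin : S.Finite
  zero : (0:G) ∉ S
  mem : b ∈ S
  img : (fun x => x + b) '' (insert 0 S) = insert e S
  enot : e ∉ S
  ene : e ≠ 0

namespace Pkg

variable {S : Set G} {b e : G}

lemma fwd (h : Pkg S b e) {x : G} (hx : x ∈ insert 0 S) : x + b ∈ insert e S :=
  h.img ▸ Set.mem_image_of_mem _ hx

lemma bwd (h : Pkg S b e) {y : G} (hy : y ∈ insert e S) : y - b ∈ insert 0 S := by
  rw [← h.img] at hy
  obtain ⟨x, hx, hxy⟩ := hy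
  have : y - b = x := by rw [← hxy]; exact add_sub_cancel_right x b
  rwa [this]

lemma bne (h : Pkg S b e) : b ≠ 0 := fun h0 => h.zero (h0 ▸ h.mem)

lemma negb (h : Pkg S b e) : -b ∉ S := by
  intro hn
  have := h.fwd (Set.mem_insert_of_mem _ hn)
  rw [neg_add_cancel] at this
  rcases this with h' | h'
  · exact h.ene h'.symm
  · exact h.zero h'

lemma chain (h : Pkg S b e) :
    ∃ s : ℕ, 1 ≤ s ∧ (∀ j : ℕ, 1 ≤ j → j ≤ s → j • b ∈ S) ∧ (s + 1) • b = e := by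
  classical
  have hex : ∃ m : ℕ, (m + 1) • b = e := by
    by_contra hno
    push_neg at hno
    have hall : ∀ j : ℕ, 1 ≤ j → j • b ∈ S := by
      intro j hj
      induction j with
      | zero => omega
      | succ j ih =>
        have hprev : j • b ∈ insert 0 S := by
          rcases Nat.eq_zero_or_pos j with rfl | hj'
          · simp
          · exact Set.mem_insert_of_mem _ (ih hj')
        have hstep := h.fwd hprev
        rw [← succ_nsmul] at hstep
        rcases hstep with hstep | hstep
        · exact absurd hstep (hno j)
        · exact hstep
    have key2 : ∀ i j : ℕ, i < j → (i+1) • b = (j+1) • b → False := by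
      intro i j hlt heq
      have h1 : (j + 1) = (i + 1) + (j - i) := by omega
      have hd : (j - i) • b = 0 := by
        have h2' : (i+1) • b + (j - i) • b = (i+1) • b := by
          rw [← add_nsmul, ← h1, ← heq]
        exact add_eq_left.mp h2' 
      rcases Nat.lt_or_ge (j - i) 2 with h2 | h2
      · have : j - i = 1 := by omega
        rw [this, one_nsmul] at hd
        exact h.bne hd
      · have hmem : (j - i - 1) • b ∈ S := hall _ (by omega)
        have : (j - i - 1) • b = -b := by
          have h3 : (j - i - 1) + 1 = j - i := by omega
          have h4 : (j - i - 1) • b + b = 0 := by rw [← succ_nsmul, h3]; exact hd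
          exact eq_neg_of_add_eq_zero_left h4
        rw [this] at hmem
        exact h.negb hmem
    have hinj : Function.Injective (fun j : ℕ => (j + 1) • b) := by
      intro i j hij
      by_contra hne'
      rcases Nat.lt_or_ge i j with hlt | hge
      · exact key2 i j hlt hij
      · exact key2 j i (by omega) hij.symm
    exact (h.fin.subset (by rintro x ⟨j, rfl⟩; exact hall (j+1) (by omega))).not_infinite
      (Set.infinite_range_of_injective hinj)
  let s := Nat.find hex
  have hse : (s + 1) • b = e := Nat.find_spec hex
  have hmin : ∀ j, j < s → (j + 1) • b ≠ e := fun j hj => Nat.find_min hex hj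
  have hs1 : 1 ≤ s := by
    rcases Nat.eq_zero_or_pos s with h' | h'
    · exfalso
      have : (1 : ℕ) • b = e := by rw [← hse, h']
      rw [one_nsmul] at this
      exact h.enot (this ▸ h.mem)
    · exact h'
  have hchain : ∀ j : ℕ, j ≤ s → (j • b ∈ insert 0 S ∧ (1 ≤ j → j • b ∈ S)) := by
    intro j
    induction j with
    | zero => intro _; exact ⟨by simp, by omega⟩
    | succ j ih =>
      intro hj
      have hstep := h.fwd (ih (by omega)).1
      rw [← succ_nsmul] at hstep
      have hmem : (j + 1) • b ∈ S := by
        rcases hstep with h' | h'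
        · exact absurd h' (hmin j (by omega))
        · exact h'
      exact ⟨Set.mem_insert_of_mem _ hmem, fun _ => hmem⟩
  exact ⟨s, hs1, fun j h1 h2 => (hchain j h2).2 h1, hse⟩

lemma ord3 (h : Pkg S b e) : addOrderOf b = 0 ∨ 3 ≤ addOrderOf b := by
  by_contra hcon
  push_neg at hcon
  obtain ⟨h1, h2⟩ := hcon
  interval_cases hn : (addOrderOf b)
  · exact h1 rfl
  · exact h.bne (AddMonoid.addOrderOf_eq_one_iff.mp hn)
  · have h2b : (2 : ℕ) • b = 0 := by rw [← hn]; exact addOrderOf_nsmul_eq_zero b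
    rw [two_nsmul] at h2b
    exact h.negb (by rw [neg_eq_of_add_eq_zero_left h2b]; exact h.mem)

end Pkg

lemma slen {S : Set G} {b e : G} (h : Pkg S b e) {s : ℕ} (hs1 : 1 ≤ s)
    (hsch : ∀ j : ℕ, 1 ≤ j → j ≤ s → j • b ∈ S)
    (hn : addOrderOf b ≠ 0) : s + 2 ≤ addOrderOf b := by
  have hn3 : 3 ≤ addOrderOf b := h.ord3.resolve_left hn
  have h1 : ¬ (addOrderOf b ≤ s) := by
    intro hle
    have : (addOrderOf b) • b ∈ S := hsch _ (by omega) hle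
    rw [addOrderOf_nsmul_eq_zero] at this
    exact h.zero this
  have h2 : s ≠ addOrderOf b - 1 := by
    intro heq
    have hmem : s • b ∈ S := hsch s hs1 le_rfl
    have : s • b = -b := by
      apply eq_neg_of_add_eq_zero_left
      rw [← succ_nsmul]
      have : s + 1 = addOrderOf b := by omega
      rw [this]
      exact addOrderOf_nsmul_eq_zero b
    rw [this] at hmem
    exact h.negb hmem
  omega

lemma step_out {S : Set G} {b e : G} (h : Pkg S b e) {s : ℕ} (hse : (s + 1) • b = e)
    {x : G} (hx : x ∈ S) (hnz : ¬ inZ b x) : x + b ∈ S ∧ x - b ∈ S := by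
  constructor
  · have hstep := h.fwd (Set.mem_insert_of_mem _ hx)
    rcases hstep with h' | h'
    · exfalso
      apply hnz
      refine ⟨(s : ℤ), ?_⟩
      have hs : (s : ℤ) • b = s • b := natCast_zsmul b s
      have : s • b + b = e := by rw [← succ_nsmul]; exact hse
      have hx' : x = s • b := by
        have h5 : x + b = s • b + b := by rw [h', ← ‹s • b + b = e›]
        exact add_right_cancel h5
      rw [hs, hx']
    · exact h'
  · have hstep := h.bwd (Set.mem_insert_of_mem _ hx)
    rcases hstep with h' | h'
    · exfalso
      apply hnz
      exact ⟨1, by rw [one_zsmul]; exact (eq_of_sub_eq_zero h').symm⟩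
    · exact h'

lemma inZ_shift {b x : G} (k : ℤ) (h : inZ b (x + k • b)) : inZ b x := by
  obtain ⟨m, hm⟩ := h
  exact ⟨m - k, by rw [sub_zsmul, hm]; abel⟩

lemma coset {S : Set G} {b e : G} (h : Pkg S b e) {s : ℕ} (hse : (s + 1) • b = e)
    {x : G} (hx : x ∈ S) (hnz : ¬ inZ b x) : ∀ k : ℤ, x + k • b ∈ S := by
  intro k
  induction k using Int.induction_on with
  | zero => simpa using hx
  | succ k ih =>
    have hnz' : ¬ inZ b (x + (k : ℤ) • b) := fun hz => hnz (inZ_shift _ hz)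
    have := (step_out h hse ih hnz').1
    have heq : (x + (k : ℤ) • b) + b = x + ((k : ℤ) + 1) • b := by
      rw [add_zsmul, one_zsmul, add_assoc]
    rwa [heq] at this
  | pred k ih =>
    have hnz' : ¬ inZ b (x + (-(k : ℤ)) • b) := fun hz => hnz (inZ_shift _ hz)
    have := (step_out h hse ih hnz').2
    have heq : (x + (-(k : ℤ)) • b) - b = x + (-(k : ℤ) - 1) • b := by
      rw [sub_zsmul, one_zsmul, sub_eq_add_neg, add_assoc]
    rwa [heq] at this

lemma case1 {S : Set G} {b e c f : G} (hb : Pkg S b e) {s : ℕ} (hse : (s + 1) • b = e)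
    (hc : Pkg S c f) (hcb : ¬ inZ b c) : False := by
  classical
  set Q : ℕ → Prop := fun j => ∀ k : ℤ, ((j + 1) • c) + k • b ∈ S with hQdef
  have hQ0 : Q 0 := by
    intro k
    have := coset hb hse hc.mem hcb k
    simpa using this
  have hkey : ∀ (j : ℕ) (k' : ℤ), ((j+1) • c + k' • b) + c = (j+2) • c + k' • b := by
    intro j k'
    have : (j + 2) • c = (j + 1) • c + c := by
      rw [← succ_nsmul]
    rw [this]; abel
  have hstep : ∀ j : ℕ, Q j → ¬ inZ b ((j + 2) • c) → Q (j + 1) := by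
    intro j hQ hni k
    have hgoal_eq : ((j + 1) + 1) = j + 2 := by omega
    rw [hgoal_eq]
    by_cases hf2 : (j+2) • c + (k-1) • b = f
    · have h1 := hQ k
      have h2 := hc.fwd (Set.mem_insert_of_mem _ h1)
      rw [hkey j k] at h2
      rcases h2 with h2 | h2
      · exfalso
        have h3 : k • b = (k - 1) • b := by
          have := h2.trans hf2.symm
          exact add_left_cancel this
        have h4 : b = 0 := by
          have h5 : (k - (k - 1)) • b = 0 := by
            rw [sub_zsmul, h3]
            simp
          have h6 : (k : ℤ) - (k - 1) = 1 := by ring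
          rwa [h6, one_zsmul] at h5
        exact hb.bne h4
      · exact h2
    · have h1 := hQ (k - 1)
      have h2 := hc.fwd (Set.mem_insert_of_mem _ h1)
      rw [hkey j (k-1)] at h2
      rcases h2 with h2 | h2
      · exact absurd h2 hf2
      · have hnz3 : ¬ inZ b ((j+2) • c + (k-1) • b) := fun hz => hni (inZ_shift _ hz)
        have h3 := (step_out hb hse h2 hnz3).1
        have heq : ((j+2) • c + (k-1) • b) + b = (j+2) • c + k • b := by
          rw [sub_zsmul, one_zsmul]
          abel
        rwa [heq] at h3
  have hd : ∃ j : ℕ, 1 ≤ j ∧ inZ b (j • c) := by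
    by_contra hno
    push_neg at hno
    have hQall : ∀ j, Q j := by
      intro j
      induction j with
      | zero => exact hQ0
      | succ j ih => exact hstep j ih (hno (j+2) (by omega))
    have hallS : ∀ j : ℕ, (j+1) • c ∈ S := fun j => by simpa using hQall j 0
    have key2 : ∀ i j : ℕ, i < j → (i+1) • c = (j+1) • c → False := by
      intro i j hlt heq
      have h1 : (j + 1) = (i + 1) + (j - i) := by omega
      have hd0 : (j - i) • c = 0 := by
        have h2' : (i+1) • c + (j - i) • c = (i+1) • c := by
          rw [← add_nsmul, ← h1, ← heq]
        exact add_eq_left.mp h2'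
      exact hno (j - i) (by omega) ⟨0, by rw [zero_zsmul]; exact hd0.symm⟩
    have hinj : Function.Injective (fun j : ℕ => (j + 1) • c) := by
      intro i j hij
      by_contra hne'
      rcases Nat.lt_or_ge i j with hlt | hge
      · exact key2 i j hlt hij
      · exact key2 j i (by omega) hij.symm
    exact (hb.fin.subset (by rintro x ⟨j, rfl⟩; exact hallS j)).not_infinite
      (Set.infinite_range_of_injective hinj)
  let d := Nat.find hd
  have hdspec : 1 ≤ d ∧ inZ b (d • c) := Nat.find_spec hd
  have hdmin : ∀ j, j < d → ¬ (1 ≤ j ∧ inZ b (j • c)) := fun j hj => Nat.find_min hd hj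
  have hd2 : 2 ≤ d := by
    rcases Nat.lt_or_ge d 2 with h' | h'
    · exfalso
      have hd1 : d = 1 := by omega
      apply hcb
      have := hdspec.2
      rw [hd1, one_nsmul] at this
      exact this
    · exact h'
  have hQd : ∀ j : ℕ, j ≤ d - 2 → Q j := by
    intro j
    induction j with
    | zero => exact fun _ => hQ0
    | succ j ih =>
      intro hj
      refine hstep j (ih (by omega)) ?_
      intro hz
      exact hdmin (j+2) (by omega) ⟨by omega, hz⟩
  obtain ⟨m, hm⟩ := hdspec.2
  have h1 : (d - 1) • c + (-m) • b ∈ S := by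
    have := hQd (d-2) le_rfl (-m)
    have hnat : (d-2) + 1 = d - 1 := by omega
    rwa [hnat] at this
  have h2 := hc.fwd (Set.mem_insert_of_mem _ h1)
  have h3 : ((d - 1) • c + (-m) • b) + c = 0 := by
    have hnat : (d - 1) + 1 = d := by omega
    have h4 : (d - 1) • c + c = d • c := by rw [← succ_nsmul, hnat]
    calc ((d-1) • c + (-m) • b) + c = ((d-1) • c + c) + (-m) • b := by abel
      _ = d • c + (-m) • b := by rw [h4]
      _ = m • b + (-m) • b := by rw [hm]
      _ = 0 := by rw [neg_zsmul, add_neg_cancel]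
  rw [h3] at h2
  rcases h2 with h2 | h2
  · exact hc.ene h2.symm
  · exact hc.zero h2

lemma mem_chain {S : Set G} {b e : G} (hb : Pkg S b e) {s : ℕ} (hs1 : 1 ≤ s)
    (hsch : ∀ j : ℕ, 1 ≤ j → j ≤ s → j • b ∈ S) (hse : (s + 1) • b = e)
    {x : G} (hx : x ∈ S) (hz : inZ b x) : ∃ j : ℕ, 1 ≤ j ∧ j ≤ s ∧ x = j • b := by
  classical
  have descent : ∀ i : ℕ, (∀ i', i' ≤ i → x - i' • b ≠ 0) → x - i • b ∈ S := by
    intro i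
    induction i with
    | zero => intro _; simpa using hx
    | succ i ih =>
      intro hne'
      have hxi : x - i • b ∈ S := ih (fun i' hi' => hne' i' (by omega))
      have hstep := hb.bwd (Set.mem_insert_of_mem _ hxi)
      have heq : (x - i • b) - b = x - (i+1) • b := by
        rw [succ_nsmul]
        abel
      rw [heq] at hstep
      rcases hstep with h' | h'
      · exact absurd h' (hne' (i+1) le_rfl)
      · exact h'
  have hzero : ∃ i : ℕ, x - i • b = 0 := by
    by_contra hno
    push_neg at hno
    have hall : ∀ i : ℕ, x - i • b ∈ S := fun i => descent i (fun i' _ => hno i')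
    have key2 : ∀ i j : ℕ, i < j → x - i • b = x - j • b → False := by
      intro i j hlt heq
      have hij : i • b = j • b := sub_right_inj.mp heq
      have hd0 : (j - i) • b = 0 := by
        have h1 : j = i + (j - i) := by omega
        have h2' : i • b + (j - i) • b = i • b := by
          rw [← add_nsmul, ← h1, ← hij]
        exact add_eq_left.mp h2'
      have hnfin : addOrderOf b ≠ 0 := by
        intro h0'
        have hdvd : addOrderOf b ∣ (j - i) := addOrderOf_dvd_iff_nsmul_eq_zero.mpr hd0
        rw [h0'] at hdvd
        have : j - i = 0 := Nat.eq_zero_of_zero_dvd hdvd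
        omega
      obtain ⟨k, hk⟩ := hz
      set n := addOrderOf b with hndef
      set i0 := (k % (n : ℤ)).toNat with hi0def
      have hnpos : (0 : ℤ) < n := by
        have : n ≠ 0 := hnfin
        omega
      have hi0 : (i0 : ℤ) = k % n := Int.toNat_of_nonneg (Int.emod_nonneg k (by omega))
      apply hno i0
      have hdvd : (n : ℤ) ∣ (k - i0) := by
        refine ⟨k / n, ?_⟩
        rw [hi0, Int.emod_def]
        ring
      rw [hndef] at hdvd
      have hzz : (k - (i0 : ℤ)) • b = 0 := addOrderOf_dvd_iff_zsmul_eq_zero.mp hdvd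
      have heq2 : (k - (i0 : ℤ)) • b = x - i0 • b := by
        rw [sub_zsmul, natCast_zsmul, hk, ← sub_eq_add_neg]
      rw [← heq2]
      exact hzz
    have hinj : Function.Injective (fun i : ℕ => x - i • b) := by
      intro i j hij
      by_contra hne'
      rcases Nat.lt_or_ge i j with hlt | hge
      · exact key2 i j hlt hij
      · exact key2 j i (by omega) hij.symm
    exact (hb.fin.subset (by rintro y ⟨i, rfl⟩; exact hall i)).not_infinite
      (Set.infinite_range_of_injective hinj)
  let j := Nat.find hzero
  have hjspec : x - j • b = 0 := Nat.find_spec hzero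
  have hjmin : ∀ i, i < j → x - i • b ≠ 0 := fun i hi => Nat.find_min hzero hi
  have hxj : x = j • b := sub_eq_zero.mp hjspec
  have hj1 : 1 ≤ j := by
    rcases Nat.eq_zero_or_pos j with h' | h'
    · exfalso
      have : x = 0 := by
        have := hjspec
        rw [h'] at this
        simpa using this
      exact hb.zero (this ▸ hx)
    · exact h'
  have hjs : j ≤ s := by
    by_contra hgt
    push_neg at hgt
    rcases Nat.lt_or_ge (s + 1) j with hj2 | hj2
    · -- j ≥ s + 2
      set i := j - (s + 1) with hidef
      have hi1 : 1 ≤ i := by omega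
      have hij : i < j := by omega
      have hmem : x - i • b ∈ S := descent i (fun i' hi' => hjmin i' (by omega))
      have : x - i • b = e := by
        rw [hxj]
        have h1 : (j - i) • b + i • b = j • b := by
          rw [← add_nsmul]
          congr 1
          omega
        have h2' : j • b - i • b = (j - i) • b := (eq_sub_of_add_eq h1).symm
        rw [h2']
        have : j - i = s + 1 := by omega
        rw [this, hse]
      rw [this] at hmem
      exact hb.enot hmem
    · -- j = s + 1
      have hj3 : j = s + 1 := by omega
      have : x = e := by rw [hxj, hj3, hse]
      exact hb.enot (this ▸ hx)
  exact ⟨j, hj1, hjs, hxj⟩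

lemma transfer {S : Set G} {b e : G} (hb : Pkg S b e) {s : ℕ} (hs1 : 1 ≤ s)
    (hsch : ∀ j : ℕ, 1 ≤ j → j ≤ s → j • b ∈ S) (hse : (s + 1) • b = e)
    (hn3 : 3 ≤ addOrderOf b) (hslen : s + 2 ≤ addOrderOf b) :
    ∀ k : ℤ, (k • b ∈ S ↔
      (1 ≤ ((k : ZMod (addOrderOf b))).val ∧ ((k : ZMod (addOrderOf b))).val ≤ s)) := by
  intro k
  haveI : NeZero (addOrderOf b) := ⟨by omega⟩
  have hdvd_iff : ∀ a : ℤ, ((a : ZMod (addOrderOf b)) = 0 ↔ a • b = 0) := by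
    intro a
    rw [ZMod.intCast_zmod_eq_zero_iff_dvd, addOrderOf_dvd_iff_zsmul_eq_zero]
  constructor
  · intro hk
    obtain ⟨j, hj1, hjs, hx⟩ := mem_chain hb hs1 hsch hse hk ⟨k, rfl⟩
    have hz0 : ((k - (j : ℤ)) : ℤ) • b = 0 := by
      rw [sub_zsmul, natCast_zsmul, ← hx]
      exact add_neg_cancel _
    have hc0 : ((k - (j : ℤ) : ℤ) : ZMod (addOrderOf b)) = 0 := (hdvd_iff _).mpr hz0
    have hcast : (k : ZMod (addOrderOf b)) = ((j : ℕ) : ZMod (addOrderOf b)) := by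
      push_cast at hc0
      have := sub_eq_zero.mp hc0
      exact_mod_cast this
    rw [hcast, ZMod.val_natCast, Nat.mod_eq_of_lt (by omega)]
    exact ⟨hj1, hjs⟩
  · rintro ⟨h1', h2'⟩
    set j := ((k : ZMod (addOrderOf b))).val with hjdef
    have hcast : ((j : ℕ) : ZMod (addOrderOf b)) = (k : ZMod (addOrderOf b)) :=
      ZMod.natCast_rightInverse _
    have hc0 : ((k - (j : ℤ) : ℤ) : ZMod (addOrderOf b)) = 0 := by
      push_cast
      rw [hcast]
      ring
    have hz0 : ((k - (j : ℤ)) : ℤ) • b = 0 := (hdvd_iff _).mp hc0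
    have : k • b = (j : ℕ) • b := by
      rw [sub_zsmul, natCast_zsmul] at hz0
      have := sub_eq_zero.mp (by rwa [← sub_eq_add_neg] at hz0)
      exact this
    rw [this]
    exact hsch j h1' h2'

/-- The set of elements of `S` lying in the cyclic subgroup generated by `b`. -/
lemma chain_set {S : Set G} {b e : G} (hb : Pkg S b e) {s : ℕ} (hs1 : 1 ≤ s)
    (hsch : ∀ j : ℕ, 1 ≤ j → j ≤ s → j • b ∈ S) (hse : (s + 1) • b = e) :
    {x | x ∈ S ∧ inZ b x} = (fun j : ℕ => j • b) '' (Set.Icc 1 s) := by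
  ext x
  constructor
  · rintro ⟨hxS, hxz⟩
    obtain ⟨j, h1', h2', rfl⟩ := mem_chain hb hs1 hsch hse hxS hxz
    exact ⟨j, ⟨h1', h2'⟩, rfl⟩
  · rintro ⟨j, ⟨h1', h2'⟩, rfl⟩
    exact ⟨hsch j h1' h2', ⟨(j : ℤ), natCast_zsmul b j⟩⟩

lemma key {S : Set G} {b e c f : G} (hb : Pkg S b e) (hc : Pkg S c f) : c = b := by
  classical
  obtain ⟨s, hs1, hsch, hse⟩ := hb.chain
  obtain ⟨t, ht1, htch, htf⟩ := hc.chain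
  by_cases hcb : inZ b c
  swap
  · exact (case1 hb hse hc hcb).elim
  by_cases hbc : inZ c b
  swap
  · exact (case1 hc htf hb hbc).elim
  obtain ⟨m, hm⟩ := hcb
  obtain ⟨m', hm'⟩ := hbc
  have hmm' : (m' * m) • b = b := by rw [mul_zsmul, hm, hm']
  rcases hb.ord3 with hn0 | hn3
  · -- infinite order
    have hz : (m' * m - 1) • b = 0 := by
      rw [sub_zsmul, one_zsmul, hmm']
      exact add_neg_cancel b
    have hdvd : (addOrderOf b : ℤ) ∣ (m' * m - 1) := addOrderOf_dvd_iff_zsmul_eq_zero.mpr hz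
    rw [hn0] at hdvd
    have h1 : m' * m - 1 = 0 := by exact_mod_cast zero_dvd_iff.mp (by exact_mod_cast hdvd)
    have hunit : IsUnit m := IsUnit.of_mul_eq_one (a := m) m' (by linarith [h1, mul_comm m m'])
    rcases Int.isUnit_iff.mp hunit with h2 | h2
    · rw [h2, one_zsmul] at hm
      exact hm.symm
    · exfalso
      rw [h2] at hm
      have : -c = b := by rw [← hm, neg_zsmul, one_zsmul, neg_neg]
      exact hc.negb (this ▸ hb.mem)
  · -- finite order, n ≥ 3
    set n := addOrderOf b with hndef
    have hslen : s + 2 ≤ n := slen hb hs1 hsch (by omega)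
    haveI : NeZero n := ⟨by omega⟩
    -- addOrderOf c = n
    have hnb : (n : ℤ) • b = 0 := by
      rw [natCast_zsmul, hndef]
      exact addOrderOf_nsmul_eq_zero b
    have hnc : (n : ℕ) • c = 0 := by
      have : (n : ℤ) • c = 0 := by
        rw [← hm, ← mul_zsmul, mul_comm, mul_zsmul, hnb, smul_zero]
      rwa [natCast_zsmul] at this
    have hcdvd : addOrderOf c ∣ n := addOrderOf_dvd_iff_nsmul_eq_zero.mpr hnc
    have hbdvd : n ∣ addOrderOf c := by
      apply addOrderOf_dvd_iff_nsmul_eq_zero.mpr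
      have h1 : (addOrderOf c : ℤ) • b = 0 := by
        rw [← hm', ← mul_zsmul, mul_comm, mul_zsmul]
        rw [natCast_zsmul, addOrderOf_nsmul_eq_zero, smul_zero]
      rwa [natCast_zsmul] at h1
    have hnceq : addOrderOf c = n := Nat.dvd_antisymm hcdvd hbdvd
    have htlen : t + 2 ≤ n := by
      have := slen hc ht1 htch (by omega)
      omega
    -- t = s
    have hinZeq : ∀ x : G, inZ b x ↔ inZ c x := by
      intro x
      constructor
      · rintro ⟨k, rfl⟩
        exact ⟨k * m', by rw [mul_zsmul, hm']⟩
      · rintro ⟨k, rfl⟩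
        exact ⟨k * m, by rw [mul_zsmul, hm]⟩
    have hAb := chain_set hb hs1 hsch hse
    have hAc := chain_set hc ht1 htch htf
    have hset_eq : {x | x ∈ S ∧ inZ b x} = {x | x ∈ S ∧ inZ c x} := by
      ext x
      simp only [Set.mem_setOf_eq, hinZeq]
    have hinj_b : Set.InjOn (fun j : ℕ => j • b) (Set.Icc 1 s) := by
      rintro i ⟨hi1, hi2⟩ j ⟨hj1, hj2⟩ hij
      simp only at hij
      by_contra hne'
      have key2 : ∀ i j : ℕ, 1 ≤ i → j ≤ s → i < j → i • b = j • b → False := by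
        intro i j h1' h2' hlt heq
        have hd0 : (j - i) • b = 0 := by
          have h3 : i • b + (j - i) • b = j • b := by
            rw [← add_nsmul]
            congr 1
            omega
          rw [heq] at h3
          exact add_eq_left.mp h3
        have hdvd2 : n ∣ (j - i) := by
          rw [hndef]
          exact addOrderOf_dvd_iff_nsmul_eq_zero.mpr hd0
        have : j - i = 0 := by
          rcases Nat.eq_zero_of_dvd_of_lt hdvd2 (by omega) with h
          exact h
        omega
      rcases Nat.lt_or_ge i j with hlt | hge
      · exact key2 i j hi1 hj2 hlt hij
      · exact key2 j i hj1 hi2 (by omega) hij.symm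
    have hinj_c : Set.InjOn (fun j : ℕ => j • c) (Set.Icc 1 t) := by
      rintro i ⟨hi1, hi2⟩ j ⟨hj1, hj2⟩ hij
      simp only at hij
      by_contra hne'
      have key2 : ∀ i j : ℕ, 1 ≤ i → j ≤ t → i < j → i • c = j • c → False := by
        intro i j h1' h2' hlt heq
        have hd0 : (j - i) • c = 0 := by
          have h3 : i • c + (j - i) • c = j • c := by
            rw [← add_nsmul]
            congr 1
            omega
          rw [heq] at h3
          exact add_eq_left.mp h3
        have hdvd2 : n ∣ (j - i) := by
          rw [← hnceq]
          exact addOrderOf_dvd_iff_nsmul_eq_zero.mpr hd0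
        have : j - i = 0 := Nat.eq_zero_of_dvd_of_lt hdvd2 (by omega)
        omega
      rcases Nat.lt_or_ge i j with hlt | hge
      · exact key2 i j hi1 hj2 hlt hij
      · exact key2 j i hj1 hi2 (by omega) hij.symm
    have hts : t = s := by
      have h1 : ((fun j : ℕ => j • b) '' (Set.Icc 1 s)).ncard = s := by
        rw [Set.ncard_image_of_injOn hinj_b, Set.ncard_eq_toFinset_card',
          Set.toFinset_Icc, Nat.card_Icc]
        omega
      have h2 : ((fun j : ℕ => j • c) '' (Set.Icc 1 t)).ncard = t := by
        rw [Set.ncard_image_of_injOn hinj_c, Set.ncard_eq_toFinset_card',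
          Set.toFinset_Icc, Nat.card_Icc]
        omega
      rw [← hAb, hset_eq, hAc] at h1
      rw [h2] at h1
      omega
    -- transfer, invariance, and the ZMod lemma
    have Tb := transfer hb hs1 hsch hse hn3 hslen
    have Tc := transfer hc ht1 htch htf (by omega : 3 ≤ addOrderOf c)
      (by omega : t + 2 ≤ addOrderOf c)
    -- recast Tc modulo n
    have Tc' : ∀ k : ℤ, (k • c ∈ S ↔
        (1 ≤ ((k : ZMod n)).val ∧ ((k : ZMod n)).val ≤ s)) := by
      intro k
      have := Tc k
      rw [hnceq, hts] at this
      exact this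
    -- unit
    have huv : (m : ZMod n) * (m' : ZMod n) = 1 := by
      have hz : (m' * m - 1) • b = 0 := by
        rw [sub_zsmul, one_zsmul, hmm']
        exact add_neg_cancel b
      have hdvd : (n : ℤ) ∣ (m' * m - 1) := by
        rw [hndef]
        exact addOrderOf_dvd_iff_zsmul_eq_zero.mpr hz
      have : ((m' * m - 1 : ℤ) : ZMod n) = 0 := (ZMod.intCast_zmod_eq_zero_iff_dvd _ _).mpr hdvd
      push_cast at this
      have h4 : (m' : ZMod n) * (m : ZMod n) = 1 := sub_eq_zero.mp this
      rw [mul_comm]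
      exact h4
    -- invariance
    have hA : ∀ x : ZMod n, (1 ≤ ((m : ZMod n) * x).val ∧ ((m : ZMod n) * x).val ≤ s) ↔
        (1 ≤ x.val ∧ x.val ≤ s) := by
      intro x
      set k : ℤ := (x.val : ℤ) with hkdef
      have hxk : ((k : ℤ) : ZMod n) = x := by
        rw [hkdef]
        push_cast
        exact ZMod.natCast_rightInverse x
      have hmk : ((m * k : ℤ) : ZMod n) = (m : ZMod n) * x := by
        rw [Int.cast_mul, hxk]
      have h1 : (m * k) • b = k • c := by
        rw [mul_comm, mul_zsmul, hm]
      constructor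
      · intro hh
        have h2 : (m * k : ℤ) • b ∈ S := by
          rw [Tb]
          rw [hmk]
          exact hh
        rw [h1] at h2
        have := (Tc' k).mp h2
        rwa [hxk] at this
      · intro hh
        have h2 : k • c ∈ S := by
          rw [Tc', hxk]
          exact hh
        rw [← h1] at h2
        have := (Tb (m * k)).mp h2
        rwa [hmk] at this
    have hu1 : (m : ZMod n) = 1 := zmod_interval n s hn3 hs1 (by omega) _ _ huv hA
    -- conclude c = b
    have : ((m - 1 : ℤ) : ZMod n) = 0 := by
      push_cast
      rw [hu1]
      ring
    have hdvd : (n : ℤ) ∣ (m - 1) := (ZMod.intCast_zmod_eq_zero_iff_dvd _ _).mp this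
    have hz : (m - 1) • b = 0 := by
      rw [hndef] at hdvd
      exact addOrderOf_dvd_iff_zsmul_eq_zero.mp hdvd
    rw [sub_zsmul, one_zsmul] at hz
    have : m • b = b := by
      have := sub_eq_zero.mp (by rwa [← sub_eq_add_neg] at hz)
      exact this
    rw [← hm, this]

end Stmt3Aux

theorem stmt3 {G : Type*} [AddCommGroup G] (α : List G) (b c : G) (hne : α ≠ [])
    (hzfb : ZeroFree (α ++ [b]))
    (h1b : (sumset (α ++ [b])).ncard = (sumset α).ncard + 1)
    (hzfc : ZeroFree (α ++ [c]))
    (h1c : (sumset (α ++ [c])).ncard = (sumset α).ncard + 1) :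
    c = b := by
  classical
  have hfin : (sumset α).Finite := by
    by_contra hinf
    rw [← Set.not_infinite, not_not] at hinf
    have h1 : (sumset (α ++ [b])).Infinite := hinf.mono (by
      rw [Stmt3Aux.sumset_append_singleton]
      exact Set.subset_union_left)
    rw [h1.ncard, hinf.ncard] at h1b
    omega
  obtain ⟨e, hbe, heS, he0, hbS⟩ := Stmt3Aux.setup α b hne hzfb h1b hfin
  obtain ⟨f, hcf, hfS, hf0, hcS⟩ := Stmt3Aux.setup α c hne hzfc h1c hfin
  have h0 : (0:G) ∉ sumset α := Stmt3Aux.zerofree_not_mem α (Stmt3Aux.zerofree_prefix hzfb)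
  exact Stmt3Aux.key ⟨hfin, h0, hbS, hbe, heS, he0⟩ ⟨hfin, h0, hcS, hcf, hfS, hf0⟩
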